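/- Let n > 2 be an even integer and let q ∈ B_n be balanced (so wt(q) = 2^(n-1)). Then no non-affine balanced q-nearly bent function exists in B_n. -/

import Mathlib

open Finset Matrix

/-- Hamming weight of a Boolean function on `𝔽₂ⁿ`. -/
def wt {n : ℕ} (f : (Fin n → ZMod 2) → ZMod 2) : ℕ :=
  (Finset.univ.filter fun a => f a = 1).card

/-- Imbalance `I_f = Σ_a (-1)^{f(a)}`. -/
def imb {n : ℕ} (f : (Fin n → ZMod 2) → ZMod 2) : ℤ :=
  ∑ a : Fin n → ZMod 2, (-1 : ℤ) ^ (f a).val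

/-- q-transform coefficient `W_q(f)(A) = Σ_a (-1)^{f(a)+q(aA)}` (for `A` a matrix;
invertibility is imposed at use sites via `GL`). -/
def Wq {n : ℕ} (q f : (Fin n → ZMod 2) → ZMod 2)
    (A : Matrix (Fin n) (Fin n) (ZMod 2)) : ℤ :=
  ∑ a : Fin n → ZMod 2, (-1 : ℤ) ^ (f a + q (Matrix.vecMul a A)).val

/-- `ρ_q = ⌈ ((2^{2n} - I_q²)/(2^n - 1))^{1/2} ⌉`. -/
noncomputable def rho {n : ℕ} (q : (Fin n → ZMod 2) → ZMod 2) : ℤ :=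
  ⌈Real.sqrt (((2 : ℝ) ^ (2 * n) - (imb q : ℝ) ^ 2) / ((2 : ℝ) ^ n - 1))⌉

/-- `f` is affine: `f(x) = v·x + c`. -/
def IsAffine {n : ℕ} (f : (Fin n → ZMod 2) → ZMod 2) : Prop :=
  ∃ (v : Fin n → ZMod 2) (c : ZMod 2), ∀ x, f x = (∑ i, v i * x i) + c

namespace NB
variable {n : ℕ}

abbrev Vn (n : ℕ) := Fin n → ZMod 2
abbrev GLn (n : ℕ) := GL (Fin n) (ZMod 2)

lemma z2add (x : ZMod 2) : x + x = 0 := by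
  rw [← two_mul, show (2:ZMod 2) = 0 from rfl, zero_mul]

lemma z2cases (x : ZMod 2) : x = 0 ∨ x = 1 := by
  revert x; decide

lemma vadd_self (x : Vn n) : x + x = 0 := funext fun i => z2add _

/-- row operation matrix: `x ↦ x + x i • c` -/
def rop (i : Fin n) (c : Vn n) : Matrix (Fin n) (Fin n) (ZMod 2) :=
  1 + Matrix.of (fun k j => if k = i then c j else 0)

lemma vecMul_rop (x : Vn n) (i : Fin n) (c : Vn n) :
    vecMul x (rop i c) = x + x i • c := by
  funext j
  simp only [rop, Matrix.vecMul_add, Matrix.vecMul_one, Pi.add_apply, Pi.smul_apply,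
    smul_eq_mul]
  congr 1
  simp [Matrix.vecMul, dotProduct, Matrix.of_apply, mul_ite, mul_zero,
    Finset.sum_ite_eq']

lemma rop_mul_self (i : Fin n) (c : Vn n) (h : c i = 0) :
    rop i c * rop i c = 1 := by
  have hE : (Matrix.of (fun k j => if k = i then c j else 0) :
      Matrix (Fin n) (Fin n) (ZMod 2)) *
      Matrix.of (fun k j => if k = i then c j else 0) = 0 := by
    ext k j
    simp only [Matrix.mul_apply, Matrix.of_apply, Matrix.zero_apply]
    by_cases hk : k = i <;> simp [hk, Finset.sum_ite_eq', h]
  have h2 : (Matrix.of (fun k j => if k = i then c j else 0) :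
      Matrix (Fin n) (Fin n) (ZMod 2)) +
      Matrix.of (fun k j => if k = i then c j else 0) = 0 := by
    ext k j; exact z2add _
  rw [rop]
  have key : ∀ E : Matrix (Fin n) (Fin n) (ZMod 2),
      (1 + E) * (1 + E) = 1 + (E + E) + E * E := by intro E; noncomm_ring
  rw [key, hE, h2, add_zero, add_zero]

def ropU (i : Fin n) (c : Vn n) (h : c i = 0) : GLn n :=
  ⟨rop i c, rop i c, rop_mul_self i c h, rop_mul_self i c h⟩

lemma vecMul_ropU (x : Vn n) (i : Fin n) (c : Vn n) (h : c i = 0) :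
    vecMul x (ropU i c h).val = x + x i • c := vecMul_rop x i c

lemma vKey (x y : Vn n) : x + y + (x + y + y) = y := by
  funext j
  simp only [Pi.add_apply]
  linear_combination z2add (x j) + z2add (y j)

lemma addcancel (x y : Vn n) : x + (x + y) = y := by
  rw [← add_assoc, vadd_self, zero_add]

lemma vecMul_mulU (x : Vn n) (M N : GLn n) :
    vecMul x (M * N).val = vecMul (vecMul x M.val) N.val := by
  rw [Units.val_mul, ← Matrix.vecMul_vecMul]

lemma vecMul_injU (M : GLn n) {x y : Vn n}
    (h : vecMul x M.val = vecMul y M.val) : x = y := by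
  have h2 : vecMul (vecMul x M.val) (M⁻¹).val
      = vecMul (vecMul y M.val) (M⁻¹).val := by rw [h]
  rwa [Matrix.vecMul_vecMul, Matrix.vecMul_vecMul, ← Units.val_mul,
    mul_inv_cancel, Units.val_one, Matrix.vecMul_one, Matrix.vecMul_one] at h2

lemma vecMul_ne_zero (M : GLn n) {x : Vn n} (hx : x ≠ 0) :
    vecMul x M.val ≠ 0 := by
  intro h
  exact hx (vecMul_injU M (h.trans (Matrix.zero_vecMul M.val).symm))

lemma vecMul_inv_eq (M : GLn n) {x y : Vn n} (h : vecMul x M.val = y) :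
    vecMul y (M⁻¹).val = x := by
  apply vecMul_injU M
  rw [← h, Matrix.vecMul_vecMul, Matrix.vecMul_vecMul, ← Units.val_mul,
    inv_mul_cancel, Units.val_one, mul_one]

lemma exists_one {a : Vn n} (ha : a ≠ 0) : ∃ i, a i = 1 := by
  by_contra h
  push_neg at h
  exact ha (funext fun i => (z2cases (a i)).resolve_right (h i))

lemma trans1 (a : Vn n) (ha : a ≠ 0) (t : Fin n) :
    ∃ M : GLn n, vecMul a M.val = Pi.single t 1 := by
  obtain ⟨i, hi⟩ := exists_one ha
  by_cases hat : a t = 1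
  · have hc : (a + Pi.single t 1 : Vn n) t = 0 := by
      simp [hat, z2add]
    refine ⟨ropU t (a + Pi.single t 1) hc, ?_⟩
    rw [vecMul_ropU, hat, one_smul, addcancel]
  · have hat0 : a t = 0 := (z2cases (a t)).resolve_right hat
    have hit : i ≠ t := fun h => hat (h ▸ hi)
    have het : (Pi.single t 1 : Vn n) i = 0 := Pi.single_eq_of_ne hit 1
    set M1 := ropU i (Pi.single t 1) het with hM1
    have h1 : vecMul a M1.val = a + Pi.single t 1 := by
      rw [hM1, vecMul_ropU, hi, one_smul]
    have h2 : (a + Pi.single t 1 : Vn n) t = 1 := by simp [hat0]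
    have hc2 : (a + Pi.single t 1 + Pi.single t 1 : Vn n) t = 0 := by simp [hat0, z2add]
    refine ⟨M1 * ropU t (a + Pi.single t 1 + Pi.single t 1) hc2, ?_⟩
    rw [vecMul_mulU, h1, vecMul_ropU, h2, one_smul]
    exact vKey a (Pi.single t 1)

lemma trans_fix {t s : Fin n} (hts : t ≠ s) (b : Vn n) (hb0 : b ≠ 0)
    (hbt : b ≠ Pi.single t 1) :
    ∃ M : GLn n, vecMul (Pi.single t 1) M.val = Pi.single t 1 ∧
      vecMul b M.val = Pi.single s 1 := by
  have hets : (Pi.single t 1 : Vn n) s = 0 := Pi.single_eq_of_ne (Ne.symm hts) 1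
  obtain ⟨i, hit, hbi⟩ : ∃ i, i ≠ t ∧ b i = 1 := by
    by_contra h
    push_neg at h
    have hz : ∀ i, i ≠ t → b i = 0 := fun i hi => (z2cases (b i)).resolve_right (h i hi)
    rcases z2cases (b t) with h0 | h1
    · refine hb0 (funext fun i => ?_)
      by_cases hi : i = t
      · rw [hi, h0]; rfl
      · rw [hz i hi]; rfl
    · refine hbt (funext fun i => ?_)
      by_cases hi : i = t
      · rw [hi, h1, Pi.single_eq_same]
      · rw [hz i hi, Pi.single_eq_of_ne hi]
  by_cases hbs : b s = 1
  · have hc : (b + Pi.single s 1 : Vn n) s = 0 := by simp [hbs, z2add]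
    refine ⟨ropU s (b + Pi.single s 1) hc, ?_, ?_⟩
    · rw [vecMul_ropU, hets, zero_smul, add_zero]
    · rw [vecMul_ropU, hbs, one_smul, addcancel]
  · have hbs0 : b s = 0 := (z2cases (b s)).resolve_right hbs
    have his : i ≠ s := fun h => hbs (h ▸ hbi)
    have hesi : (Pi.single s 1 : Vn n) i = 0 := Pi.single_eq_of_ne his 1
    have heti : (Pi.single t 1 : Vn n) i = 0 := Pi.single_eq_of_ne hit 1
    set M1 := ropU i (Pi.single s 1) hesi with hM1
    have hb' : vecMul b M1.val = b + Pi.single s 1 := by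
      rw [hM1, vecMul_ropU, hbi, one_smul]
    have ht' : vecMul (Pi.single t 1) M1.val = Pi.single t 1 := by
      rw [hM1, vecMul_ropU, heti, zero_smul, add_zero]
    have h1 : (b + Pi.single s 1 : Vn n) s = 1 := by simp [hbs0]
    have hc2 : (b + Pi.single s 1 + Pi.single s 1 : Vn n) s = 0 := by simp [hbs0, z2add]
    refine ⟨M1 * ropU s (b + Pi.single s 1 + Pi.single s 1) hc2, ?_, ?_⟩
    · rw [vecMul_mulU, ht', vecMul_ropU, hets, zero_smul, add_zero]
    · rw [vecMul_mulU, hb', vecMul_ropU, h1, one_smul]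
      exact vKey b (Pi.single s 1)

lemma trans2 (hn : 1 < n) (a b : Vn n) (ha : a ≠ 0) (hb : b ≠ 0) (hab : a ≠ b) :
    ∃ M : GLn n, vecMul a M.val = Pi.single ⟨0, by omega⟩ 1 ∧
      vecMul b M.val = Pi.single ⟨1, hn⟩ 1 := by
  have hts : (⟨0, by omega⟩ : Fin n) ≠ ⟨1, hn⟩ := by
    intro h; exact absurd (Fin.mk.injEq .. ▸ h) (by simp)
  obtain ⟨M1, hM1⟩ := trans1 a ha ⟨0, by omega⟩
  have hb'0 : vecMul b M1.val ≠ 0 := vecMul_ne_zero M1 hb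
  have hb't : vecMul b M1.val ≠ Pi.single ⟨0, by omega⟩ 1 := by
    intro h
    exact hab (vecMul_injU M1 (hM1.trans h.symm))
  obtain ⟨M2, hfix, hsend⟩ := trans_fix hts (vecMul b M1.val) hb'0 hb't
  exact ⟨M1 * M2, by rw [vecMul_mulU, hM1, hfix], by rw [vecMul_mulU, hsend]⟩

lemma trans_pair (hn : 1 < n) {a b x y : Vn n} (ha : a ≠ 0) (hb : b ≠ 0)
    (hab : a ≠ b) (hx : x ≠ 0) (hy : y ≠ 0) (hxy : x ≠ y) :
    ∃ M : GLn n, vecMul a M.val = x ∧ vecMul b M.val = y := by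
  obtain ⟨Ma, ha1, ha2⟩ := trans2 hn a b ha hb hab
  obtain ⟨Mx, hx1, hx2⟩ := trans2 hn x y hx hy hxy
  refine ⟨Ma * Mx⁻¹, ?_, ?_⟩
  · rw [vecMul_mulU, ha1, vecMul_inv_eq Mx hx1]
  · rw [vecMul_mulU, ha2, vecMul_inv_eq Mx hx2]

lemma pos_of_ne_zero {a : Vn n} (ha : a ≠ 0) : 0 < n := by
  rcases Nat.eq_zero_or_pos n with h | h
  · subst h; exact absurd (funext fun i => i.elim0) ha
  · exact h

lemma trans_single {x y : Vn n} (hx : x ≠ 0) (hy : y ≠ 0) :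
    ∃ M : GLn n, vecMul x M.val = y := by
  have hn : 0 < n := pos_of_ne_zero hx
  obtain ⟨Mx, hMx⟩ := trans1 x hx ⟨0, hn⟩
  obtain ⟨My, hMy⟩ := trans1 y hy ⟨0, hn⟩
  exact ⟨Mx * My⁻¹, by rw [vecMul_mulU, hMx, vecMul_inv_eq My hMy]⟩

noncomputable def stab1 (n : ℕ) (u : Vn n) : ℕ :=
  (univ.filter fun A : GLn n => vecMul u A.val = u).card

noncomputable def stab2 (n : ℕ) (u v : Vn n) : ℕ :=
  (univ.filter fun A : GLn n => vecMul u A.val = u ∧ vecMul v A.val = v).card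

lemma stab1_pos (u : Vn n) : 0 < stab1 n u := by
  refine Finset.card_pos.mpr ⟨1, ?_⟩
  simp [Finset.mem_filter, Units.val_one, Matrix.vecMul_one]

lemma stab2_pos (u v : Vn n) : 0 < stab2 n u v := by
  refine Finset.card_pos.mpr ⟨1, ?_⟩
  simp [Finset.mem_filter, Units.val_one, Matrix.vecMul_one]

lemma fiber_single (u a x : Vn n) (hu : u ≠ 0) (ha : a ≠ 0) (hx : x ≠ 0) :
    (univ.filter fun A : GLn n => vecMul a A.val = x).card = stab1 n u := by
  obtain ⟨M1, hM1⟩ := trans_single hu ha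
  obtain ⟨M2, hM2⟩ := trans_single hu hx
  refine Finset.card_bij' (fun A _ => M1 * A * M2⁻¹) (fun B _ => M1⁻¹ * B * M2)
    ?_ ?_ ?_ ?_
  · intro A hA
    rw [Finset.mem_filter] at hA ⊢
    refine ⟨Finset.mem_univ _, ?_⟩
    rw [vecMul_mulU, vecMul_mulU, hM1, hA.2, vecMul_inv_eq M2 hM2]
  · intro B hB
    rw [Finset.mem_filter] at hB ⊢
    refine ⟨Finset.mem_univ _, ?_⟩
    rw [vecMul_mulU, vecMul_mulU, vecMul_inv_eq M1 hM1, hB.2, hM2]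
  · intro A _; group
  · intro B _; group

lemma fiber_pair (hn : 1 < n) (u v a b p1 p2 : Vn n)
    (hu : u ≠ 0) (hv : v ≠ 0) (huv : u ≠ v)
    (ha : a ≠ 0) (hb : b ≠ 0) (hab : a ≠ b)
    (hp1 : p1 ≠ 0) (hp2 : p2 ≠ 0) (hp12 : p1 ≠ p2) :
    (univ.filter fun A : GLn n =>
      vecMul a A.val = p1 ∧ vecMul b A.val = p2).card = stab2 n u v := by
  obtain ⟨M1, hM1a, hM1b⟩ := trans_pair hn hu hv huv ha hb hab
  obtain ⟨M2, hM2a, hM2b⟩ := trans_pair hn hu hv huv hp1 hp2 hp12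
  refine Finset.card_bij' (fun A _ => M1 * A * M2⁻¹) (fun B _ => M1⁻¹ * B * M2)
    ?_ ?_ ?_ ?_
  · intro A hA
    rw [Finset.mem_filter] at hA ⊢
    refine ⟨Finset.mem_univ _, ?_, ?_⟩
    · rw [vecMul_mulU, vecMul_mulU, hM1a, hA.2.1, vecMul_inv_eq M2 hM2a]
    · rw [vecMul_mulU, vecMul_mulU, hM1b, hA.2.2, vecMul_inv_eq M2 hM2b]
  · intro B hB
    rw [Finset.mem_filter] at hB ⊢
    refine ⟨Finset.mem_univ _, ?_, ?_⟩
    · rw [vecMul_mulU, vecMul_mulU, vecMul_inv_eq M1 hM1a, hB.2.1, hM2a]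
    · rw [vecMul_mulU, vecMul_mulU, vecMul_inv_eq M1 hM1b, hB.2.2, hM2b]
  · intro A _; group
  · intro B _; group

lemma sum_single (u a : Vn n) (hu : u ≠ 0) (ha : a ≠ 0) (ψ : Vn n → ℤ) :
    ∑ A : GLn n, ψ (vecMul a A.val)
      = (stab1 n u : ℤ) * ∑ x ∈ univ.erase (0 : Vn n), ψ x := by
  have hmaps : ∀ A : GLn n, A ∈ (univ : Finset (GLn n)) →
      vecMul a A.val ∈ univ.erase (0 : Vn n) := fun A _ =>
    Finset.mem_erase.mpr ⟨vecMul_ne_zero A ha, Finset.mem_univ _⟩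
  rw [← Finset.sum_fiberwise_of_maps_to hmaps (fun A : GLn n => ψ (vecMul a A.val))]
  rw [Finset.mul_sum]
  refine Finset.sum_congr rfl fun x hx => ?_
  have hx0 : x ≠ 0 := (Finset.mem_erase.mp hx).1
  have hcongr : ∀ A ∈ univ.filter (fun A : GLn n => vecMul a A.val = x),
      ψ (vecMul a A.val) = ψ x := fun A hA => by
    rw [(Finset.mem_filter.mp hA).2]
  rw [Finset.sum_congr rfl hcongr, Finset.sum_const, nsmul_eq_mul,
    fiber_single u a x hu ha hx0]

lemma sum_pair (hn : 1 < n) (u v a b : Vn n)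
    (hu : u ≠ 0) (hv : v ≠ 0) (huv : u ≠ v)
    (ha : a ≠ 0) (hb : b ≠ 0) (hab : a ≠ b) (φ : Vn n → Vn n → ℤ) :
    ∑ A : GLn n, φ (vecMul a A.val) (vecMul b A.val)
      = (stab2 n u v : ℤ) *
        ∑ p ∈ univ.filter (fun p : Vn n × Vn n => p.1 ≠ 0 ∧ p.2 ≠ 0 ∧ p.1 ≠ p.2),
          φ p.1 p.2 := by
  have hmaps : ∀ A : GLn n, A ∈ (univ : Finset (GLn n)) →
      (vecMul a A.val, vecMul b A.val) ∈
        univ.filter (fun p : Vn n × Vn n => p.1 ≠ 0 ∧ p.2 ≠ 0 ∧ p.1 ≠ p.2) := by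
    intro A _
    refine Finset.mem_filter.mpr ⟨Finset.mem_univ _,
      vecMul_ne_zero A ha, vecMul_ne_zero A hb, fun h => hab (vecMul_injU A h)⟩
  rw [← Finset.sum_fiberwise_of_maps_to hmaps
    (fun A : GLn n => φ (vecMul a A.val) (vecMul b A.val))]
  rw [Finset.mul_sum]
  refine Finset.sum_congr rfl fun p hp => ?_
  obtain ⟨-, hp1, hp2, hp12⟩ := Finset.mem_filter.mp hp
  have hcongr : ∀ A ∈ univ.filter
      (fun A : GLn n => (vecMul a A.val, vecMul b A.val) = p),
      φ (vecMul a A.val) (vecMul b A.val) = φ p.1 p.2 := fun A hA => by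
    have h := (Finset.mem_filter.mp hA).2
    rw [show vecMul a A.val = p.1 from congrArg Prod.fst h,
      show vecMul b A.val = p.2 from congrArg Prod.snd h]
  rw [Finset.sum_congr rfl hcongr, Finset.sum_const, nsmul_eq_mul]
  congr 1
  rw [show (univ.filter fun A : GLn n => (vecMul a A.val, vecMul b A.val) = p)
      = univ.filter fun A : GLn n => vecMul a A.val = p.1 ∧ vecMul b A.val = p.2 from
    Finset.filter_congr fun A _ => by rw [Prod.ext_iff]]
  exact congrArg _ (fiber_pair hn u v a b p.1 p.2 hu hv huv ha hb hab hp1 hp2 hp12)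

/-- sign character -/
def chi {n : ℕ} (f : Vn n → ZMod 2) (a : Vn n) : ℤ := (-1) ^ ((f a).val)

lemma chi_add (u v : ZMod 2) :
    (-1 : ℤ) ^ ((u + v).val) = (-1) ^ u.val * (-1) ^ v.val := by revert u v; decide

lemma chi_mul_self (f : Vn n → ZMod 2) (a : Vn n) : chi f a * chi f a = 1 := by
  have : ∀ u : ZMod 2, ((-1 : ℤ) ^ u.val) * ((-1) ^ u.val) = 1 := by decide
  exact this (f a)

lemma chi1mod (u : ZMod 2) : ((-1 : ℤ) ^ u.val) % 2 = 1 := by revert u; decide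

lemma card_Vn : Fintype.card (Vn n) = 2 ^ n := by
  simp [Fintype.card_fun]

lemma sum_chi_eq_zero (hn : 0 < n) (f : Vn n → ZMod 2) (hf : wt f = 2 ^ (n - 1)) :
    ∑ a : Vn n, chi f a = 0 := by
  have h1 : ∀ a : Vn n, chi f a = if f a = 1 then -1 else 1 := by
    intro a
    unfold chi
    rcases z2cases (f a) with h | h <;> rw [h] <;> decide
  rw [Finset.sum_congr rfl fun a _ => h1 a, Finset.sum_ite, Finset.sum_const,
    Finset.sum_const]
  have h2 : (univ.filter fun a : Vn n => f a = 1).card = 2 ^ (n - 1) := hf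
  have h3 : (univ.filter fun a : Vn n => ¬ f a = 1).card = 2 ^ n - 2 ^ (n - 1) := by
    have := Finset.card_filter_add_card_filter_not
      (s := (univ : Finset (Vn n))) (p := fun a => f a = 1)
    rw [Finset.card_univ, card_Vn] at this
    omega
  rw [h2, h3]
  have h4 : 2 ^ n = 2 * 2 ^ (n - 1) := by
    conv_lhs => rw [show n = (n - 1) + 1 from by omega]
    ring
  have h5 : 2 ^ n - 2 ^ (n - 1) = 2 ^ (n - 1) := by omega
  rw [h5]
  push_cast
  ring

lemma sum_chi_erase (hn : 0 < n) (f : Vn n → ZMod 2) (hf : wt f = 2 ^ (n - 1)) :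
    ∑ x ∈ univ.erase (0 : Vn n), chi f x = - chi f 0 := by
  have h := Finset.add_sum_erase univ (chi f) (Finset.mem_univ (0 : Vn n))
  rw [sum_chi_eq_zero hn f hf] at h
  linarith

lemma even_Wq (q f : Vn n → ZMod 2) (hn : 0 < n)
    (A : Matrix (Fin n) (Fin n) (ZMod 2)) : Even (Wq q f A) := by
  rw [Int.even_iff, Wq, Finset.sum_int_mod,
    Finset.sum_congr rfl fun a _ => chi1mod ((f a + q (Matrix.vecMul a A))),
    Finset.sum_const, Finset.card_univ, card_Vn, nsmul_eq_mul, mul_one]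
  push_cast
  have : ((2 : ℤ) ^ n) = 2 * 2 ^ (n - 1) := by
    conv_lhs => rw [show n = (n - 1) + 1 from by omega]
    ring
  rw [this]
  simp [Int.mul_emod_right]

lemma rho_le (hn2 : 2 < n) (hne : Even n) (q : Vn n → ZMod 2) (himb : imb q = 0) :
    rho q ≤ 2 ^ (n / 2) + 1 := by
  obtain ⟨m, hm⟩ := hne
  have hm2 : 2 ≤ m := by omega
  have hnd : n / 2 = m := by omega
  rw [rho, himb]
  rw [Int.ceil_le]
  have hy : (0 : ℝ) ≤ ((2 ^ (n / 2) + 1 : ℤ) : ℝ) := by positivity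
  rw [Real.sqrt_le_left hy]
  have hpos : (0 : ℝ) < (2 : ℝ) ^ n - 1 := by
    have : (2 : ℝ) ^ 0 < (2 : ℝ) ^ n := by
      apply pow_lt_pow_right₀ (by norm_num) (by omega)
    simpa using this
  rw [div_le_iff₀ hpos]
  have ht : (4 : ℝ) ≤ (2 : ℝ) ^ m := by
    calc (4 : ℝ) = 2 ^ 2 := by norm_num
    _ ≤ 2 ^ m := by apply pow_le_pow_right₀ (by norm_num) hm2
  have e1 : (2 : ℝ) ^ (2 * n) = ((2 : ℝ) ^ m) ^ 4 := by
    rw [← pow_mul]; congr 1; omega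
  have e2 : (2 : ℝ) ^ n = ((2 : ℝ) ^ m) ^ 2 := by
    rw [← pow_mul]; congr 1; omega
  have e3 : ((2 ^ (n / 2) + 1 : ℤ) : ℝ) = (2 : ℝ) ^ m + 1 := by
    push_cast [hnd]; ring
  rw [e1, e2, e3]
  set t := (2 : ℝ) ^ m
  nlinarith [ht]

end NB

open NB in
/-- For even `n > 2` and balanced `q`, there is no non-affine balanced
`q`-nearly bent function. -/
theorem no_nearly_bent_balanced_q (n : ℕ) (hn : 2 < n) (hne : Even n)
    (q : (Fin n → ZMod 2) → ZMod 2) (hq : wt q = 2 ^ (n - 1)) :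
    ¬ ∃ f : (Fin n → ZMod 2) → ZMod 2,
        wt f = 2 ^ (n - 1) ∧ ¬ IsAffine f ∧
        ∀ A : GL (Fin n) (ZMod 2), |Wq q f A.val| ≤ rho q := by
  rintro ⟨f, hf, -, hW⟩
  obtain ⟨m, hm⟩ := id hne
  have hn0 : 0 < n := by omega
  have hn1 : 1 < n := by omega
  set e0 : Vn n := Pi.single ⟨0, hn0⟩ 1 with he0def
  set e1 : Vn n := Pi.single ⟨1, hn1⟩ 1 with he1def
  have he00 : e0 ≠ 0 := by
    intro h
    have := congrFun h ⟨0, hn0⟩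
    rw [he0def, Pi.single_eq_same] at this
    exact one_ne_zero this
  have he10 : e1 ≠ 0 := by
    intro h
    have := congrFun h ⟨1, hn1⟩
    rw [he1def, Pi.single_eq_same] at this
    exact one_ne_zero this
  have hne01 : (⟨0, hn0⟩ : Fin n) ≠ ⟨1, hn1⟩ := by
    intro h
    have : (0 : ℕ) = 1 := congrArg Fin.val h
    omega
  have he01 : e0 ≠ e1 := by
    intro h
    have := congrFun h ⟨0, hn0⟩
    rw [he0def, he1def, Pi.single_eq_same, Pi.single_eq_of_ne hne01] at this
    exact absurd this (by decide)
  -- balancedness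
  have hcf : ∑ a : Vn n, chi f a = 0 := sum_chi_eq_zero hn0 f hf
  have hcq : ∑ a : Vn n, chi q a = 0 := sum_chi_eq_zero hn0 q hq
  have hcfe : ∑ x ∈ univ.erase (0 : Vn n), chi f x = - chi f 0 :=
    sum_chi_erase hn0 f hf
  have hcqe : ∑ x ∈ univ.erase (0 : Vn n), chi q x = - chi q 0 :=
    sum_chi_erase hn0 q hq
  have himb : imb q = 0 := hcq
  have hcarder : ((univ.erase (0 : Vn n)).card : ℤ) = 2 ^ n - 1 := by
    have h1 : 1 ≤ 2 ^ n := Nat.one_le_two_pow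
    rw [Finset.card_erase_of_mem (Finset.mem_univ _), Finset.card_univ, card_Vn,
      Nat.cast_sub h1]
    push_cast
    ring
  -- the upper bound on each coefficient
  have hub : ∀ A : GLn n, (Wq q f A.val) ^ 2 ≤ 2 ^ n := by
    intro A
    have h1 : |Wq q f A.val| ≤ 2 ^ (n / 2) + 1 :=
      le_trans (hW A) (rho_le hn hne q himb)
    have heW : Even (Wq q f A.val) := even_Wq q f hn0 A.val
    have heabs : Even |Wq q f A.val| := by
      rcases abs_choice (Wq q f A.val) with h | h <;> rw [h]
      · exact heW
      · exact heW.neg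
    have hEX : Even ((2 : ℤ) ^ (n / 2)) := by
      refine ⟨2 ^ (n / 2 - 1), ?_⟩
      conv_lhs => rw [show n / 2 = (n / 2 - 1) + 1 from by omega]
      ring
    have hne2 : |Wq q f A.val| ≠ 2 ^ (n / 2) + 1 := by
      intro h
      exact (Int.even_add_one.mp (h ▸ heabs)) hEX
    have h2 : |Wq q f A.val| ≤ 2 ^ (n / 2) :=
      Int.lt_add_one_iff.mp (lt_of_le_of_ne h1 hne2)
    calc (Wq q f A.val) ^ 2 = |Wq q f A.val| ^ 2 := (sq_abs _).symm
      _ ≤ ((2 : ℤ) ^ (n / 2)) ^ 2 := by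
          exact pow_le_pow_left₀ (abs_nonneg _) h2 2
      _ = 2 ^ n := by
          rw [← pow_mul]
          congr 1
          omega
  -- expansion of the squared coefficient
  have hWexp : ∀ A : GLn n,
      Wq q f A.val = ∑ a : Vn n, chi f a * chi q (vecMul a A.val) := by
    intro A
    exact Finset.sum_congr rfl fun a _ => chi_add (f a) (q (vecMul a A.val))
  have hsq : ∀ A : GLn n, (Wq q f A.val) ^ 2
      = ∑ a : Vn n, ∑ b : Vn n,
          (chi f a * chi f b) * (chi q (vecMul a A.val) * chi q (vecMul b A.val)) := by
    intro A
    rw [hWexp A, sq, Finset.sum_mul_sum]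
    exact Finset.sum_congr rfl fun a _ => Finset.sum_congr rfl fun b _ => by ring
  -- the S-sums
  set S : Vn n → Vn n → ℤ := fun a b =>
    ∑ A : GLn n, chi q (vecMul a A.val) * chi q (vecMul b A.val) with hSdef
  have hT : ∑ A : GLn n, (Wq q f A.val) ^ 2
      = ∑ a : Vn n, ∑ b : Vn n, (chi f a * chi f b) * S a b := by
    rw [Finset.sum_congr rfl fun A _ => hsq A, Finset.sum_comm]
    refine Finset.sum_congr rfl fun a _ => ?_
    rw [Finset.sum_comm]
    refine Finset.sum_congr rfl fun b _ => ?_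
    simp only [hSdef]
    rw [← Finset.mul_sum]
  have hSdiag : ∀ a : Vn n, S a a = (Fintype.card (GLn n) : ℤ) := by
    intro a
    simp only [hSdef]
    rw [Finset.sum_congr rfl fun A _ => chi_mul_self q (vecMul a A.val),
      Finset.sum_const, Finset.card_univ, nsmul_eq_mul, mul_one]
  have hS0b : ∀ b : Vn n, b ≠ 0 → S 0 b = -(stab1 n e0 : ℤ) := by
    intro b hb
    simp only [hSdef]
    have step1 : ∀ A : GLn n, chi q (vecMul (0 : Vn n) A.val) * chi q (vecMul b A.val)
        = chi q 0 * chi q (vecMul b A.val) := by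
      intro A; rw [Matrix.zero_vecMul]
    rw [Finset.sum_congr rfl fun A _ => step1 A, ← Finset.mul_sum,
      sum_single e0 b he00 hb (chi q), hcqe]
    linear_combination (-(stab1 n e0 : ℤ)) * chi_mul_self q 0
  have hSa0 : ∀ a : Vn n, a ≠ 0 → S a 0 = -(stab1 n e0 : ℤ) := by
    intro a ha
    have hcomm : S a 0 = S 0 a := by
      simp only [hSdef]
      exact Finset.sum_congr rfl fun A _ => by ring
    rw [hcomm, hS0b a ha]
  have hSab : ∀ a b : Vn n, a ≠ 0 → b ≠ 0 → a ≠ b →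
      S a b = (stab2 n e0 e1 : ℤ) * (2 - 2 ^ n) := by
    intro a b ha hb hab
    simp only [hSdef]
    rw [sum_pair hn1 e0 e1 a b he00 he10 he01 ha hb hab
      (fun x y => chi q x * chi q y)]
    congr 1
    -- ∑ over independent pairs of chi q * chi q = 2 - 2^n
    rw [Finset.sum_filter, Fintype.sum_prod_type]
    have hx : ∀ x : Vn n,
        (∑ y : Vn n, if (x ≠ 0 ∧ y ≠ 0 ∧ x ≠ y) then chi q x * chi q y else 0)
        = if x ≠ 0 then (-(chi q x * chi q 0) - 1) else 0 := by
      intro x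
      by_cases hx0 : x = 0
      · simp [hx0]
      · rw [if_pos hx0]
        have hcond : ∀ y : Vn n,
            (if (x ≠ 0 ∧ y ≠ 0 ∧ x ≠ y) then chi q x * chi q y else 0)
            = if (y ≠ 0 ∧ y ≠ x) then chi q x * chi q y else 0 := by
          intro y
          refine if_congr ?_ rfl rfl
          constructor
          · rintro ⟨-, h2, h3⟩; exact ⟨h2, fun h => h3 h.symm⟩
          · rintro ⟨h2, h3⟩; exact ⟨hx0, h2, fun h => h3 h.symm⟩
        rw [Finset.sum_congr rfl fun y _ => hcond y, ← Finset.sum_filter]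
        have hset : (univ.filter fun y : Vn n => y ≠ 0 ∧ y ≠ x)
            = (univ.erase (0 : Vn n)).erase x := by
          ext y
          simp [Finset.mem_erase, and_comm]
        rw [hset, ← Finset.mul_sum,
          Finset.sum_erase_eq_sub (Finset.mem_erase.mpr ⟨hx0, Finset.mem_univ x⟩),
          hcqe]
        linear_combination (-1 : ℤ) * chi_mul_self q x
    rw [Finset.sum_congr rfl fun x _ => hx x, ← Finset.sum_filter,
      Finset.filter_ne']
    have hshape : ∀ x ∈ univ.erase (0 : Vn n),
        (-(chi q x * chi q 0) - 1) = (-(chi q 0)) * chi q x + (-1) := fun x _ => by ring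
    rw [Finset.sum_congr rfl hshape, Finset.sum_add_distrib, ← Finset.mul_sum,
      hcqe, Finset.sum_const, nsmul_eq_mul, hcarder]
    linear_combination chi_mul_self q 0
  -- row sums
  have hrow0 : ∑ b : Vn n, (chi f 0 * chi f b) * S 0 b
      = (Fintype.card (GLn n) : ℤ) + (stab1 n e0 : ℤ) := by
    rw [← Finset.add_sum_erase univ (fun b => (chi f 0 * chi f b) * S 0 b)
      (Finset.mem_univ (0 : Vn n))]
    have h1 : (chi f 0 * chi f 0) * S 0 0 = (Fintype.card (GLn n) : ℤ) := by
      rw [hSdiag 0, chi_mul_self f 0, one_mul]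
    have h2 : ∀ b ∈ univ.erase (0 : Vn n),
        (chi f 0 * chi f b) * S 0 b = (-(stab1 n e0 : ℤ) * chi f 0) * chi f b := by
      intro b hb
      rw [hS0b b (Finset.mem_erase.mp hb).1]
      ring
    rw [h1, Finset.sum_congr rfl h2, ← Finset.mul_sum, hcfe]
    linear_combination (stab1 n e0 : ℤ) * chi_mul_self f 0
  have hrowa : ∀ a : Vn n, a ≠ 0 → ∑ b : Vn n, (chi f a * chi f b) * S a b
      = ((Fintype.card (GLn n) : ℤ) - (stab2 n e0 e1 : ℤ) * (2 - 2 ^ n))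
        + ((-(stab1 n e0 : ℤ) - (stab2 n e0 e1 : ℤ) * (2 - 2 ^ n)) * chi f 0)
          * chi f a := by
    intro a ha
    have hmem : a ∈ univ.erase (0 : Vn n) := Finset.mem_erase.mpr ⟨ha, Finset.mem_univ a⟩
    rw [← Finset.add_sum_erase univ (fun b => (chi f a * chi f b) * S a b)
      (Finset.mem_univ (0 : Vn n)),
      ← Finset.add_sum_erase (univ.erase (0 : Vn n))
        (fun b => (chi f a * chi f b) * S a b) hmem]
    have h0 : (chi f a * chi f 0) * S a 0 = -(stab1 n e0 : ℤ) * (chi f a * chi f 0) := by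
      rw [hSa0 a ha]; ring
    have h1 : (chi f a * chi f a) * S a a = (Fintype.card (GLn n) : ℤ) := by
      rw [hSdiag a, chi_mul_self f a, one_mul]
    have h2 : ∀ b ∈ (univ.erase (0 : Vn n)).erase a,
        (chi f a * chi f b) * S a b
          = ((stab2 n e0 e1 : ℤ) * (2 - 2 ^ n) * chi f a) * chi f b := by
      intro b hb
      obtain ⟨hba, hbmem⟩ := Finset.mem_erase.mp hb
      have hb0 := (Finset.mem_erase.mp hbmem).1
      rw [hSab a b ha hb0 (fun h => hba h.symm)]
      ring
    rw [h0, h1, Finset.sum_congr rfl h2, ← Finset.mul_sum,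
      Finset.sum_erase_eq_sub hmem, hcfe]
    linear_combination ((stab2 n e0 e1 : ℤ) * (2 ^ n - 2)) * chi_mul_self f a
  -- total value of the sum of squares
  have hTot : ∑ A : GLn n, (Wq q f A.val) ^ 2
      = (2 ^ n : ℤ) * (Fintype.card (GLn n) : ℤ) + 2 * (stab1 n e0 : ℤ)
        + (stab2 n e0 e1 : ℤ) * (2 ^ n - 2) ^ 2 := by
    rw [hT, ← Finset.add_sum_erase univ
      (fun a => ∑ b : Vn n, (chi f a * chi f b) * S a b)
      (Finset.mem_univ (0 : Vn n)), hrow0,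
      Finset.sum_congr rfl (fun a ha => hrowa a (Finset.mem_erase.mp ha).1),
      Finset.sum_add_distrib, Finset.sum_const, ← Finset.mul_sum, hcfe,
      nsmul_eq_mul, hcarder]
    linear_combination ((stab1 n e0 : ℤ) + (stab2 n e0 e1 : ℤ) * (2 - 2 ^ n))
      * chi_mul_self f 0
  -- the upper bound on the sum of squares
  have hTle : ∑ A : GLn n, (Wq q f A.val) ^ 2
      ≤ (Fintype.card (GLn n) : ℤ) * 2 ^ n := by
    calc ∑ A : GLn n, (Wq q f A.val) ^ 2 ≤ ∑ _A : GLn n, (2 ^ n : ℤ) :=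
          Finset.sum_le_sum fun A _ => hub A
      _ = (Fintype.card (GLn n) : ℤ) * 2 ^ n := by
          rw [Finset.sum_const, Finset.card_univ, nsmul_eq_mul]
  -- contradiction
  have hk1p : (1 : ℤ) ≤ (stab1 n e0 : ℤ) := by exact_mod_cast stab1_pos e0
  have hk2p : (1 : ℤ) ≤ (stab2 n e0 e1 : ℤ) := by exact_mod_cast stab2_pos e0 e1
  have h8 : (8 : ℤ) ≤ 2 ^ n := by
    calc (8 : ℤ) = 2 ^ 3 := by norm_num
      _ ≤ 2 ^ n := by
        apply pow_le_pow_right₀ (by norm_num)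
        omega
  rw [hTot] at hTle
  nlinarith [hk1p, hk2p, h8, hTle]
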